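/- Assume there is a constant c₃ > 0 such that ℙ_d(τ_{O,O} < +∞) ≤ 1/d + c₃/d² for every d ≥ 4. Then for every d ≥ 4 and all x, y ∈ ℤ₊^d with x ≠ y and ‖x‖ = ‖y‖, ℙ_d(τ_{x,y} < +∞) ≤ c₃/(d(d − 1)). -/

import Mathlib

open MeasureTheory ProbabilityTheory Filter Set

noncomputable section

/-- The oriented random walk on `ℤ₊^d` started at `x` whose `m`-th increment is the
standard basis vector `e_{inc m}`: its position after `k` steps. -/
def walkRW {Ω : Type} {d : ℕ} (x : Fin d → ℕ) (inc : ℕ → Ω → Fin d) (k : ℕ) (ω : Ω) :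
    Fin d → ℕ :=
  fun i => x i + ∑ m ∈ Finset.range k, (if inc m ω = i then 1 else 0)

/-- The `ℓ¹` norm of a vertex of `ℤ₊^d`. -/
def nrm {d : ℕ} (x : Fin d → ℕ) : ℕ := ∑ i, x i

/-- Two independent oriented random walks on `ℤ₊^d`: the two increment sequences `inc1`
and `inc2` are i.i.d. uniform on the standard basis directions `Fin d`, and all the
increments are jointly independent; `ℙ_d` is the probability measure `P`. -/
structure RWModel {Ω : Type} [MeasurableSpace Ω] (P : Measure Ω) (d : ℕ) where
  hprob : IsProbabilityMeasure P
  inc1 : ℕ → Ω → Fin d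
  inc2 : ℕ → Ω → Fin d
  h1meas : ∀ n, Measurable (inc1 n)
  h2meas : ∀ n, Measurable (inc2 n)
  h1law : ∀ (n : ℕ) (j : Fin d), P {ω | inc1 n ω = j} = (d : ENNReal)⁻¹
  h2law : ∀ (n : ℕ) (j : Fin d), P {ω | inc2 n ω = j} = (d : ENNReal)⁻¹
  hIndep : iIndepFun (β := fun _ : ℕ ⊕ ℕ => Fin d)
    (Sum.elim inc1 inc2) P

/-- The event `τ_{x,y} < ∞` (for `‖x‖ ≤ ‖y‖`): the walk started at `x` eventually hits the
trajectory of the walk started at `y`, i.e. there is `k ≥ ‖y‖ − ‖x‖` with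
`ϑ_k^x = ν_{k−‖y‖+‖x‖}^y`. -/
def meetEvent {Ω : Type} {d : ℕ} (inc1 inc2 : ℕ → Ω → Fin d) (x y : Fin d → ℕ) :
    Set Ω :=
  {ω | ∃ k : ℕ, nrm y - nrm x ≤ k ∧
    walkRW x inc1 k ω = walkRW y inc2 (k - (nrm y - nrm x)) ω}

/-- The event `τ_{O,O} < ∞`: the two walks started at the origin collide at some time
`n ≥ 1`. -/
def meetOrigin {Ω : Type} {d : ℕ} (inc1 inc2 : ℕ → Ω → Fin d) : Set Ω :=
  {ω | ∃ n : ℕ, 1 ≤ n ∧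
    walkRW (fun _ => 0) inc1 n ω = walkRW (fun _ => 0) inc2 n ω}

/- ----------------------------------------------------------------------- -/
/- Auxiliary development for the proof.                                     -/
/- ----------------------------------------------------------------------- -/

namespace M15

abbrev Lam (d : ℕ) := (ℕ ⊕ ℕ) → Fin d

variable {d : ℕ}

def tsh (t : ℕ) : ℕ ⊕ ℕ → ℕ ⊕ ℕ := Sum.map (· + t) (· + t)

lemma tsh_inj (t : ℕ) : Function.Injective (tsh t) := by
  intro a b h
  cases a <;> cases b <;>
    simp only [tsh, Sum.map_inl, Sum.map_inr, Sum.inl.injEq, Sum.inr.injEq,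
      reduceCtorEq] at h ⊢ <;> omega

def untsh (t : ℕ) : ℕ ⊕ ℕ → ℕ ⊕ ℕ := Sum.map (· - t) (· - t)

lemma untsh_tsh (t : ℕ) (j : ℕ ⊕ ℕ) : untsh t (tsh t j) = j := by
  cases j <;> simp [tsh, untsh]

/-- shift on path space -/
def shl (t : ℕ) (l : Lam d) : Lam d := fun j => l (tsh t j)

lemma meas_shl (t : ℕ) : Measurable (shl (d := d) t) :=
  measurable_pi_lambda _ fun j => measurable_pi_apply _

/-- walk from `x` with increments `e` -/
def wk (x : Fin d → ℕ) (e : ℕ → Fin d) (k : ℕ) : Fin d → ℕ :=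
  fun i => x i + ∑ m ∈ Finset.range k, (if e m = i then 1 else 0)

lemma sum_range_add' (f : ℕ → ℕ) (t k : ℕ) :
    ∑ m ∈ Finset.range (t + k), f m
      = (∑ m ∈ Finset.range t, f m) + ∑ m ∈ Finset.range k, f (t + m) := by
  induction k with
  | zero => simp
  | succ k ih =>
      have h : t + (k + 1) = (t + k) + 1 := rfl
      rw [h, Finset.sum_range_succ, ih, Finset.sum_range_succ, add_assoc]

lemma wk_add (x : Fin d → ℕ) (e : ℕ → Fin d) (t k : ℕ) :
    wk x e (t + k) = wk (wk x e t) (fun m => e (t + m)) k := by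
  funext i
  simp only [wk, sum_range_add', add_assoc]

def WW (x : Fin d → ℕ) (k : ℕ) (l : Lam d) : Fin d → ℕ := wk x (fun m => l (Sum.inl m)) k
def VV (y : Fin d → ℕ) (k : ℕ) (l : Lam d) : Fin d → ℕ := wk y (fun m => l (Sum.inr m)) k

lemma WW_add (x : Fin d → ℕ) (t k : ℕ) (l : Lam d) :
    WW x (t + k) l = WW (WW x t l) k (shl t l) := by
  unfold WW shl
  rw [wk_add]
  congr 1
  funext m
  simp [tsh, Nat.add_comm]

lemma VV_add (y : Fin d → ℕ) (t k : ℕ) (l : Lam d) :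
    VV y (t + k) l = VV (VV y t l) k (shl t l) := by
  unfold VV shl
  rw [wk_add]
  congr 1
  funext m
  simp [tsh, Nat.add_comm]

def MeetSet (x y : Fin d → ℕ) : Set (Lam d) := {l | ∃ k, WW x k l = VV y k l}

def OrigSet (d : ℕ) : Set (Lam d) :=
  {l | ∃ n, 1 ≤ n ∧ WW (fun _ => 0) n l = VV (fun _ => 0) n l}

lemma meas_WWi (x : Fin d → ℕ) (k : ℕ) (i : Fin d) :
    Measurable fun l : Lam d => WW x k l i := by
  unfold WW wk
  apply Measurable.add measurable_const
  apply Finset.measurable_sum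
  intro m _
  exact Measurable.comp (Measurable.of_discrete (f := fun a : Fin d => if a = i then (1:ℕ) else 0))
    (measurable_pi_apply _)

lemma meas_VVi (y : Fin d → ℕ) (k : ℕ) (i : Fin d) :
    Measurable fun l : Lam d => VV y k l i := by
  unfold VV wk
  apply Measurable.add measurable_const
  apply Finset.measurable_sum
  intro m _
  exact Measurable.comp (Measurable.of_discrete (f := fun a : Fin d => if a = i then (1:ℕ) else 0))
    (measurable_pi_apply _)

lemma meas_WW (x : Fin d → ℕ) (k : ℕ) : Measurable fun l : Lam d => WW x k l :=
  measurable_pi_lambda _ fun i => meas_WWi x k i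

lemma meas_VV (y : Fin d → ℕ) (k : ℕ) : Measurable fun l : Lam d => VV y k l :=
  measurable_pi_lambda _ fun i => meas_VVi y k i

lemma meas_MeetSet (x y : Fin d → ℕ) : MeasurableSet (MeetSet x y) := by
  have h : MeetSet x y = ⋃ k, {l : Lam d | WW x k l = VV y k l} := by
    ext l; simp [MeetSet]
  rw [h]
  exact MeasurableSet.iUnion fun k =>
    measurableSet_eq_fun (meas_WW x k) (meas_VV y k)

lemma meas_OrigSet : MeasurableSet (OrigSet d) := by
  have h : OrigSet d = ⋃ n, ⋃ (_ : 1 ≤ n),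
      {l : Lam d | WW (fun _ => 0) n l = VV (fun _ => 0) n l} := by
    ext l; simp [OrigSet]
  rw [h]
  exact MeasurableSet.iUnion fun n => MeasurableSet.iUnion fun _ =>
    measurableSet_eq_fun (meas_WW _ n) (meas_VV _ n)

/-- translation invariance of the meeting set (pathwise). -/
lemma MeetSet_congr (x y x' y' : Fin d → ℕ) (h : ∀ c, x c + y' c = x' c + y c) :
    MeetSet x y = MeetSet x' y' := by
  ext l
  constructor <;> rintro ⟨k, hk⟩ <;> refine ⟨k, funext fun c => ?_⟩ <;>
  · have h1 := congrFun hk c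
    have h2 := h c
    simp only [WW, VV, wk] at h1 ⊢
    omega

/-- the standard basis vector -/
def bv (i : Fin d) : Fin d → ℕ := fun c => if i = c then 1 else 0

/-- `v = u + e_i - e_j` for some `i ≠ j`. -/
def Adiff (u v : Fin d → ℕ) : Prop :=
  ∃ i j : Fin d, i ≠ j ∧
    ∀ c, u c + (if i = c then 1 else 0) = v c + (if j = c then 1 else 0)

/-- a permutation moving two given points to two other given points -/
lemma exists_perm {α : Type} [DecidableEq α] (a b c e : α) (hab : a ≠ b) (hce : c ≠ e) :
    ∃ π : Equiv.Perm α, π a = c ∧ π b = e := by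
  refine ⟨(Equiv.swap a c).trans (Equiv.swap ((Equiv.swap a c) b) e), ?_, ?_⟩
  · have h1 : (Equiv.swap a c) b ≠ c := by
      intro h
      have hb : b = a := (Equiv.swap a c).injective (h.trans (Equiv.swap_apply_left a c).symm)
      exact hab hb.symm
    simp only [Equiv.trans_apply, Equiv.swap_apply_left]
    exact Equiv.swap_apply_of_ne_of_ne (Ne.symm h1) hce
  · simp only [Equiv.trans_apply, Equiv.swap_apply_left]

section Model

variable {Ω : Type} [MeasurableSpace Ω] {P : Measure Ω} (R : RWModel P d)

abbrev inc : (ℕ ⊕ ℕ) → Ω → Fin d := Sum.elim R.inc1 R.inc2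

def Phi (t : ℕ) (ω : Ω) : Lam d := fun j => inc R (tsh t j) ω

lemma meas_inc (j : ℕ ⊕ ℕ) : Measurable (inc R j) := by
  cases j with
  | inl n => exact R.h1meas n
  | inr n => exact R.h2meas n

lemma meas_Phi (t : ℕ) : Measurable (Phi R t) :=
  measurable_pi_lambda _ fun j => meas_inc R _

def mu : Measure (Lam d) := Measure.map (Phi R 0) P

lemma mu_prob : IsProbabilityMeasure (mu R) := by
  haveI := R.hprob
  exact Measure.isProbabilityMeasure_map (meas_Phi R 0).aemeasurable

lemma shl_Phi (t : ℕ) (ω : Ω) : shl t (Phi R 0 ω) = Phi R t ω := by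
  funext j
  cases j <;> rfl

lemma law_inc (j : ℕ ⊕ ℕ) (a : Fin d) : P (inc R j ⁻¹' {a}) = (d : ENNReal)⁻¹ := by
  cases j with
  | inl n => exact R.h1law n a
  | inr n => exact R.h2law n a

lemma cylP (S : Finset (ℕ ⊕ ℕ)) (g : (ℕ ⊕ ℕ) → Fin d) :
    P (⋂ j ∈ S, inc R j ⁻¹' {g j}) = (d : ENNReal)⁻¹ ^ S.card := by
  have h := R.hIndep.measure_inter_preimage_eq_mul S
    (sets := fun j => {g j}) (fun i _ => MeasurableSet.of_discrete)
  rw [h, Finset.prod_congr rfl (fun j _ => law_inc R j (g j)), Finset.prod_const]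

lemma cylP_sh (t : ℕ) (S : Finset (ℕ ⊕ ℕ)) (g : (ℕ ⊕ ℕ) → Fin d) :
    P (⋂ j ∈ S, inc R (tsh t j) ⁻¹' {g j}) = (d : ENNReal)⁻¹ ^ S.card := by
  classical
  have h2 : ⋂ j ∈ S, inc R (tsh t j) ⁻¹' {g j}
      = ⋂ j' ∈ S.image (tsh t), inc R j' ⁻¹' {g (untsh t j')} := by
    ext ω
    simp only [Set.mem_iInter, Finset.mem_image]
    constructor
    · rintro h j' ⟨j, hj, rfl⟩
      rw [untsh_tsh]
      exact h j hj
    · intro h j hj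
      have := h (tsh t j) ⟨j, hj, rfl⟩
      rwa [untsh_tsh] at this
  rw [h2, cylP R _ _, Finset.card_image_of_injective S (tsh_inj t)]

/-- Master uniqueness lemma: any map to path space whose cylinder probabilities are
the iid-uniform ones has law `mu R`. -/
lemma map_eq_mu (hd : 0 < d) (ζ : Ω → Lam d) (hζ : Measurable ζ)
    (hcylζ : ∀ (S : Finset (ℕ ⊕ ℕ)) (g : (ℕ ⊕ ℕ) → Fin d),
      P (⋂ j ∈ S, {ω | ζ ω j = g j}) = (d : ENNReal)⁻¹ ^ S.card) :
    Measure.map ζ P = mu R := by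
  classical
  haveI := R.hprob
  have key : ∀ (η : Ω → Lam d), Measurable η →
      (∀ (S : Finset (ℕ ⊕ ℕ)) (g : (ℕ ⊕ ℕ) → Fin d),
        P (⋂ j ∈ S, {ω | η ω j = g j}) = (d : ENNReal)⁻¹ ^ S.card) →
      ∀ (S : Finset (ℕ ⊕ ℕ)) (B : Set ((j : S) → Fin d)),
        Measure.map η P (cylinder S B)
          = (B.toFinite.toFinset.card : ENNReal) * (d : ENNReal)⁻¹ ^ S.card := by
    intro η hη hcyl S B
    rw [Measure.map_apply hη (MeasurableSet.cylinder S (MeasurableSet.of_discrete))]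
    have hrep : ∀ b : (j : S) → Fin d,
        {ω | ∀ j (hj : j ∈ S), η ω j = b ⟨j, hj⟩}
          = ⋂ j ∈ S, {ω | η ω j = (fun j' => if hj : j' ∈ S then b ⟨j', hj⟩ else ⟨0, hd⟩) j} := by
      intro b
      ext ω
      simp only [Set.mem_iInter, Set.mem_setOf_eq]
      constructor
      · intro h j hj; rw [dif_pos hj]; exact h j hj
      · intro h j hj; have := h j hj; rwa [dif_pos hj] at this
    have hdec : η ⁻¹' cylinder S B
        = ⋃ b ∈ B.toFinite.toFinset, {ω | ∀ j (hj : j ∈ S), η ω j = b ⟨j, hj⟩} := by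
      ext ω
      simp only [Set.mem_preimage, mem_cylinder, Set.mem_iUnion, Set.Finite.mem_toFinset,
        Set.mem_setOf_eq]
      constructor
      · intro h
        exact ⟨S.restrict (η ω), h, fun j hj => rfl⟩
      · rintro ⟨b, hb, h⟩
        have : S.restrict (η ω) = b := funext fun j => h j j.2
        rwa [this]
    rw [hdec, measure_biUnion_finset ?hd ?hm]
    case hd =>
      intro b _ b' _ hne
      simp only [Function.onFun]
      rw [Set.disjoint_left]
      intro ω h1 h2
      exact hne (funext fun j => by rw [← h1 j j.2, ← h2 j j.2])
    case hm =>
      intro b _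
      rw [hrep b]
      exact MeasurableSet.biInter (Finset.countable_toSet S) fun j _ =>
        ((measurable_pi_apply j).comp hη) (measurableSet_singleton _)
    have hval : ∀ b ∈ B.toFinite.toFinset,
        P {ω | ∀ j (hj : j ∈ S), η ω j = b ⟨j, hj⟩} = (d : ENNReal)⁻¹ ^ S.card := by
      intro b _
      rw [hrep b, hcyl]
    rw [Finset.sum_congr rfl hval, Finset.sum_const, nsmul_eq_mul]
  have hcylΦ : ∀ (S : Finset (ℕ ⊕ ℕ)) (g : (ℕ ⊕ ℕ) → Fin d),
      P (⋂ j ∈ S, {ω | Phi R 0 ω j = g j}) = (d : ENNReal)⁻¹ ^ S.card := by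
    intro S g
    exact cylP_sh R 0 S g
  refine ext_of_generate_finite (measurableCylinders (fun _ : ℕ ⊕ ℕ => Fin d))
    generateFrom_measurableCylinders.symm isPiSystem_measurableCylinders ?_ ?_
  · intro s hs
    obtain ⟨S, B, _, rfl⟩ := (mem_measurableCylinders s).mp hs
    rw [key ζ hζ hcylζ S B]
    rw [show mu R = Measure.map (Phi R 0) P from rfl]
    rw [key (Phi R 0) (meas_Phi R 0) hcylΦ S B]
  · haveI : IsProbabilityMeasure (Measure.map ζ P) := Measure.isProbabilityMeasure_map hζ.aemeasurable
    haveI : IsProbabilityMeasure (mu R) := mu_prob R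
    rw [measure_univ, measure_univ]

lemma map_Phi (hd : 0 < d) (t : ℕ) : Measure.map (Phi R t) P = mu R := by
  apply map_eq_mu R hd (Phi R t) (meas_Phi R t)
  intro S g
  exact cylP_sh R t S g

lemma P_Phi_preimage (hd : 0 < d) (t : ℕ) {M : Set (Lam d)} (hM : MeasurableSet M) :
    P (Phi R t ⁻¹' M) = mu R M := by
  rw [← Measure.map_apply (meas_Phi R t) hM, map_Phi R hd t]

/-- permutation invariance -/
lemma mu_perm (hd : 0 < d) (π : Equiv.Perm (Fin d)) {M : Set (Lam d)} (hM : MeasurableSet M) :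
    mu R ((fun l : Lam d => fun j => π (l j)) ⁻¹' M) = mu R M := by
  have hpm : Measurable (fun l : Lam d => fun j => π (l j)) :=
    measurable_pi_lambda _ fun j =>
      (Measurable.of_discrete (f := π)).comp (measurable_pi_apply j)
  have hmap : Measure.map ((fun l : Lam d => fun j => π (l j)) ∘ Phi R 0) P = mu R := by
    apply map_eq_mu R hd _ (hpm.comp (meas_Phi R 0))
    intro S g
    show P (⋂ j ∈ S, {ω | π (Phi R 0 ω j) = g j}) = (d : ENNReal)⁻¹ ^ S.card
    have hset : (⋂ j ∈ S, {ω | π (Phi R 0 ω j) = g j})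
        = ⋂ j ∈ S, {ω | Phi R 0 ω j = π.symm (g j)} := by
      ext ω
      simp only [Set.mem_iInter, Set.mem_setOf_eq]
      constructor <;> intro h j hj
      · rw [← h j hj, Equiv.symm_apply_apply]
      · rw [h j hj, Equiv.apply_symm_apply]
    rw [hset]
    exact cylP_sh R 0 S (fun j => π.symm (g j))
  calc mu R ((fun l : Lam d => fun j => π (l j)) ⁻¹' M)
      = P (Phi R 0 ⁻¹' ((fun l : Lam d => fun j => π (l j)) ⁻¹' M)) :=
        (P_Phi_preimage R hd 0 (hpm hM)).symm
    _ = P (((fun l : Lam d => fun j => π (l j)) ∘ Phi R 0) ⁻¹' M) := by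
        rw [Set.preimage_comp]
    _ = Measure.map ((fun l : Lam d => fun j => π (l j)) ∘ Phi R 0) P M :=
        (Measure.map_apply (hpm.comp (meas_Phi R 0)) hM).symm
    _ = mu R M := by rw [hmap]

/-- the observation of the increments before time `t` -/
def rho (t : ℕ) (ω : Ω) : Fin t → Fin d × Fin d := fun m => (R.inc1 m ω, R.inc2 m ω)

lemma indep_main (t : ℕ) (A : Set (Fin t → Fin d × Fin d)) {M : Set (Lam d)}
    (hM : MeasurableSet M) :
    P (rho R t ⁻¹' A ∩ Phi R t ⁻¹' M)
      = P (rho R t ⁻¹' A) * P (Phi R t ⁻¹' M) := by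
  classical
  set F : (ℕ ⊕ ℕ) → MeasurableSpace Ω :=
    fun j => MeasurableSpace.comap (inc R j) inferInstance with hF
  have hIndep : iIndep F P := R.hIndep
  have hle : ∀ j, F j ≤ ‹MeasurableSpace Ω› := fun j => (meas_inc R j).comap_le
  set T : Set (ℕ ⊕ ℕ) := {j | Sum.elim (fun n => n < t) (fun n => n < t) j} with hT
  have h := indep_biSup_compl hle hIndep T
  have h1 : MeasurableSet[⨆ j ∈ T, F j] (rho R t ⁻¹' A) := by
    have hm : Measurable[⨆ j ∈ T, F j] (rho R t) := by
      letI : MeasurableSpace Ω := ⨆ j ∈ T, F j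
      apply measurable_pi_lambda
      intro m
      apply Measurable.prod
      · refine Measurable.mono (Measurable.of_comap_le (le_refl (F (Sum.inl (m : ℕ)))))
          (le_biSup F ?_) le_rfl
        show ((m : ℕ) < t)
        exact m.isLt
      · refine Measurable.mono (Measurable.of_comap_le (le_refl (F (Sum.inr (m : ℕ)))))
          (le_biSup F ?_) le_rfl
        show ((m : ℕ) < t)
        exact m.isLt
    exact hm MeasurableSet.of_discrete
  have h2 : MeasurableSet[⨆ j ∈ Tᶜ, F j] (Phi R t ⁻¹' M) := by
    have hm : Measurable[⨆ j ∈ Tᶜ, F j] (Phi R t) := by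
      letI : MeasurableSpace Ω := ⨆ j ∈ Tᶜ, F j
      apply measurable_pi_lambda
      intro j
      refine Measurable.mono (Measurable.of_comap_le (le_refl (F (tsh t j))))
        (le_biSup F ?_) le_rfl
      show ¬ (Sum.elim (fun n => n < t) (fun n => n < t) (tsh t j))
      cases j <;> simp [tsh]
    exact hm hM
  exact ((indep_iff_forall_indepSet P).mp h _ _ h1 h2).measure_inter_eq_mul

lemma WW_congr (x : Fin d → ℕ) (k : ℕ) {l l' : Lam d}
    (h : ∀ m < k, l (Sum.inl m) = l' (Sum.inl m)) : WW x k l = WW x k l' := by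
  funext i
  simp only [WW, wk]
  congr 1
  refine Finset.sum_congr rfl fun m hm => ?_
  show (if l (Sum.inl m) = i then (1:ℕ) else 0) = if l' (Sum.inl m) = i then 1 else 0
  rw [h m (Finset.mem_range.mp hm)]

lemma VV_congr (y : Fin d → ℕ) (k : ℕ) {l l' : Lam d}
    (h : ∀ m < k, l (Sum.inr m) = l' (Sum.inr m)) : VV y k l = VV y k l' := by
  funext i
  simp only [VV, wk]
  congr 1
  refine Finset.sum_congr rfl fun m hm => ?_
  show (if l (Sum.inr m) = i then (1:ℕ) else 0) = if l' (Sum.inr m) = i then 1 else 0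
  rw [h m (Finset.mem_range.mp hm)]

lemma WW_succ (x : Fin d → ℕ) (k : ℕ) (l : Lam d) (c : Fin d) :
    WW x (k + 1) l c = WW x k l c + (if l (Sum.inl k) = c then 1 else 0) := by
  simp only [WW, wk]
  rw [Finset.sum_range_succ, ← add_assoc]

lemma VV_succ (y : Fin d → ℕ) (k : ℕ) (l : Lam d) (c : Fin d) :
    VV y (k + 1) l c = VV y k l c + (if l (Sum.inr k) = c then 1 else 0) := by
  simp only [VV, wk]
  rw [Finset.sum_range_succ, ← add_assoc]

/-- permutation of directions, pathwise -/
lemma MeetSet_perm (π : Equiv.Perm (Fin d)) (x y : Fin d → ℕ) :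
    (fun l : Lam d => fun j => π (l j)) ⁻¹' MeetSet x y = MeetSet (x ∘ π) (y ∘ π) := by
  have keyW : ∀ (x : Fin d → ℕ) (k : ℕ) (l : Lam d) (b : Fin d),
      WW x k (fun j => π (l j)) (π b) = WW (x ∘ π) k l b := by
    intro x k l b
    simp [WW, wk, Equiv.apply_eq_iff_eq, Function.comp]
  have keyV : ∀ (y : Fin d → ℕ) (k : ℕ) (l : Lam d) (b : Fin d),
      VV y k (fun j => π (l j)) (π b) = VV (y ∘ π) k l b := by
    intro y k l b
    simp [VV, wk, Equiv.apply_eq_iff_eq, Function.comp]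
  ext l
  constructor
  · rintro ⟨k, hk⟩
    exact ⟨k, funext fun b => (keyW x k l b).symm.trans
      ((congrFun hk (π b)).trans (keyV y k l b))⟩
  · rintro ⟨k, hk⟩
    refine ⟨k, funext fun c => ?_⟩
    obtain ⟨b, rfl⟩ := π.surjective c
    rw [keyW, keyV]
    exact congrFun hk b

lemma meet_bv_eq (hd : 0 < d) (i j i' j' : Fin d) (hij : i ≠ j) (hij' : i' ≠ j') :
    mu R (MeetSet (bv i) (bv j)) = mu R (MeetSet (bv i') (bv j')) := by
  classical
  obtain ⟨π, hπ1, hπ2⟩ := exists_perm i' j' i j hij' hij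
  have hbi : bv i ∘ π = bv i' := by
    funext c
    simp only [bv, Function.comp, ← hπ1, Equiv.apply_eq_iff_eq]
  have hbj : bv j ∘ π = bv j' := by
    funext c
    simp only [bv, Function.comp, ← hπ2, Equiv.apply_eq_iff_eq]
  have hpre : (fun l : Lam d => fun j'' => π (l j'')) ⁻¹' MeetSet (bv i) (bv j)
      = MeetSet (bv i') (bv j') := by
    rw [MeetSet_perm, hbi, hbj]
  calc mu R (MeetSet (bv i) (bv j))
      = mu R ((fun l : Lam d => fun j'' => π (l j'')) ⁻¹' MeetSet (bv i) (bv j)) :=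
        (mu_perm R hd π (meas_MeetSet _ _)).symm
    _ = mu R (MeetSet (bv i') (bv j')) := by rw [hpre]

/-- **Step B**: the meeting probability from distinct starting points is at most the
meeting probability from two distinct neighbouring basis vectors. -/
lemma meet_le (hd : 0 < d) (x y : Fin d → ℕ) (hxy : x ≠ y) {i0 i1 : Fin d} (h01 : i0 ≠ i1) :
    mu R (MeetSet x y) ≤ mu R (MeetSet (bv i0) (bv i1)) := by
  classical
  haveI := R.hprob
  set q := mu R (MeetSet (bv i0) (bv i1)) with hqdef
  set Q : ℕ × (Fin d → ℕ) × (Fin d → ℕ) → Set (Lam d) := fun tuv =>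
    {l | WW x tuv.1 l = tuv.2.1 ∧ VV y tuv.1 l = tuv.2.2 ∧ Adiff tuv.2.1 tuv.2.2 ∧
      ∀ s < tuv.1, ¬ Adiff (WW x s l) (VV y s l)} with hQ
  have measQ : ∀ tuv, MeasurableSet (Q tuv) := by
    rintro ⟨t, u, v⟩
    have hrw : Q (t, u, v) = {l | WW x t l = u} ∩ ({l | VV y t l = v} ∩
        ({l : Lam d | Adiff u v} ∩ ⋂ s ∈ Finset.range t,
          {l : Lam d | ¬ Adiff (WW x s l) (VV y s l)})) := by
      ext l
      simp only [hQ, Set.mem_setOf_eq, Set.mem_inter_iff, Set.mem_iInter, Finset.mem_range]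
      try tauto
    rw [hrw]
    refine MeasurableSet.inter ?_ (MeasurableSet.inter ?_ (MeasurableSet.inter ?_ ?_))
    · exact (meas_WW x t) (measurableSet_singleton u)
    · exact (meas_VV y t) (measurableSet_singleton v)
    · by_cases h : Adiff u v
      · simp only [h, Set.setOf_true]; exact MeasurableSet.univ
      · simp only [h, Set.setOf_false]; exact MeasurableSet.empty
    · refine MeasurableSet.biInter (Finset.countable_toSet _) fun s _ => ?_
      exact ((meas_WW x s).prodMk (meas_VV y s))
        (MeasurableSet.of_discrete (s := {p : (Fin d → ℕ) × (Fin d → ℕ) | ¬ Adiff p.1 p.2}))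
  have hdisj : Pairwise (Function.onFun Disjoint Q) := by
    rintro ⟨t, u, v⟩ ⟨t', u', v'⟩ hne
    rw [Function.onFun, Set.disjoint_left]
    rintro l ⟨hW, hV, hA, hmin⟩ ⟨hW', hV', hA', hmin'⟩
    have ht : t = t' := by
      by_contra htt
      rcases Nat.lt_or_ge t t' with hlt | hge
      · exact hmin' t hlt (by rw [hW, hV]; exact hA)
      · exact hmin t' (by omega) (by rw [hW', hV']; exact hA')
    subst ht
    apply hne
    have hu : u = u' := hW.symm.trans hW'
    have hv : v = v' := hV.symm.trans hV'
    rw [hu, hv]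
  have hcover : MeetSet x y ⊆
      ⋃ tuv : ℕ × (Fin d → ℕ) × (Fin d → ℕ),
        (Q tuv ∩ shl tuv.1 ⁻¹' MeetSet tuv.2.1 tuv.2.2) := by
    rintro l ⟨k, hk⟩
    have hex : ∃ k, WW x k l = VV y k l := ⟨k, hk⟩
    have hk0 : WW x (Nat.find hex) l = VV y (Nat.find hex) l := Nat.find_spec hex
    set k0 := Nat.find hex with hk0def
    have hpos : k0 ≠ 0 := by
      intro h
      apply hxy
      rw [h] at hk0
      funext i
      have := congrFun hk0 i
      simpa [WW, VV, wk] using this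
    have hs0 : k0 - 1 + 1 = k0 := by omega
    set s0 := k0 - 1 with hs0def
    have hstep : ∀ c, WW x s0 l c + (if l (Sum.inl s0) = c then 1 else 0)
        = VV y s0 l c + (if l (Sum.inr s0) = c then 1 else 0) := by
      intro c
      have h1 := congrFun hk0 c
      rw [← hs0, WW_succ, VV_succ] at h1
      exact h1
    have hij : l (Sum.inl s0) ≠ l (Sum.inr s0) := by
      intro h
      have hmeet : WW x s0 l = VV y s0 l := by
        funext c
        have hc := hstep c
        rw [h] at hc
        exact Nat.add_right_cancel hc
      exact Nat.find_min hex (show s0 < k0 by omega) hmeet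
    have hAdex : ∃ s, Adiff (WW x s l) (VV y s l) :=
      ⟨s0, l (Sum.inl s0), l (Sum.inr s0), hij, hstep⟩
    set t := Nat.find hAdex with htdef
    have hAt : Adiff (WW x t l) (VV y t l) := Nat.find_spec hAdex
    have hmin : ∀ s < t, ¬ Adiff (WW x s l) (VV y s l) := fun s hs => Nat.find_min hAdex hs
    have htle : t ≤ k0 := le_trans
      (Nat.find_min' hAdex ⟨l (Sum.inl s0), l (Sum.inr s0), hij, hstep⟩) (by omega)
    refine Set.mem_iUnion.2 ⟨(t, WW x t l, VV y t l), ⟨⟨rfl, rfl, hAt, hmin⟩, ?_⟩⟩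
    show shl t l ∈ MeetSet (WW x t l) (VV y t l)
    refine ⟨k0 - t, ?_⟩
    rw [← WW_add x t (k0 - t) l, ← VV_add y t (k0 - t) l, Nat.add_sub_cancel' htle]
    exact hk0
  have hPQ : ∀ tuv : ℕ × (Fin d → ℕ) × (Fin d → ℕ),
      P (Phi R 0 ⁻¹' (Q tuv ∩ shl tuv.1 ⁻¹' MeetSet tuv.2.1 tuv.2.2))
        ≤ P (Phi R 0 ⁻¹' Q tuv) * q := by
    rintro ⟨t, u, v⟩
    by_cases hA : Adiff u v
    · obtain ⟨i, j, hij, hsum⟩ := hA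
      have hM : MeasurableSet (MeetSet u v) := meas_MeetSet u v
      set fill : (Fin t → Fin d × Fin d) → Lam d := fun p =>
        Sum.elim (fun n => if h : n < t then (p ⟨n, h⟩).1 else i)
          (fun n => if h : n < t then (p ⟨n, h⟩).2 else i) with hfill
      set Aset : Set (Fin t → Fin d × Fin d) := {p | fill p ∈ Q (t, u, v)} with hAset
      have hlocal : ∀ (l l' : Lam d), (∀ m < t, l (Sum.inl m) = l' (Sum.inl m)) →
          (∀ m < t, l (Sum.inr m) = l' (Sum.inr m)) →
          (l ∈ Q (t, u, v) ↔ l' ∈ Q (t, u, v)) := by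
        intro l l' h1 h2
        have hW : ∀ s ≤ t, WW x s l = WW x s l' :=
          fun s hs => WW_congr x s (fun m hm => h1 m (lt_of_lt_of_le hm hs))
        have hV : ∀ s ≤ t, VV y s l = VV y s l' :=
          fun s hs => VV_congr y s (fun m hm => h2 m (lt_of_lt_of_le hm hs))
        simp only [hQ, Set.mem_setOf_eq]
        rw [hW t le_rfl, hV t le_rfl]
        constructor
        · rintro ⟨ha, hb, hc, hmin⟩
          exact ⟨ha, hb, hc, fun s hs => by
            rw [← hW s hs.le, ← hV s hs.le]; exact hmin s hs⟩
        · rintro ⟨ha, hb, hc, hmin⟩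
          exact ⟨ha, hb, hc, fun s hs => by
            rw [hW s hs.le, hV s hs.le]; exact hmin s hs⟩
      have hQeq : Phi R 0 ⁻¹' Q (t, u, v) = rho R t ⁻¹' Aset := by
        ext ω
        show Phi R 0 ω ∈ Q (t, u, v) ↔ fill (rho R t ω) ∈ Q (t, u, v)
        apply hlocal
        · intro m hm
          show R.inc1 (m + 0) ω = fill (rho R t ω) (Sum.inl m)
          simp only [hfill, Sum.elim_inl, dif_pos hm]
          rfl
        · intro m hm
          show R.inc2 (m + 0) ω = fill (rho R t ω) (Sum.inr m)
          simp only [hfill, Sum.elim_inr, dif_pos hm]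
          rfl
      have hsh : Phi R 0 ⁻¹' (shl t ⁻¹' MeetSet u v) = Phi R t ⁻¹' MeetSet u v := by
        ext ω
        simp only [Set.mem_preimage]
        rw [shl_Phi]
      have htr : MeetSet u v = MeetSet (bv j) (bv i) := by
        apply MeetSet_congr
        intro c
        have := hsum c
        simp only [bv]
        omega
      calc P (Phi R 0 ⁻¹' (Q (t, u, v) ∩ shl t ⁻¹' MeetSet u v))
          = P ((rho R t ⁻¹' Aset) ∩ Phi R t ⁻¹' MeetSet u v) := by
            rw [Set.preimage_inter, hQeq, hsh]
        _ = P (rho R t ⁻¹' Aset) * P (Phi R t ⁻¹' MeetSet u v) := indep_main R t Aset hM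
        _ = P (Phi R 0 ⁻¹' Q (t, u, v)) * mu R (MeetSet u v) := by
            rw [hQeq, P_Phi_preimage R hd t hM]
        _ = P (Phi R 0 ⁻¹' Q (t, u, v)) * q := by
            rw [htr, meet_bv_eq R hd j i i0 i1 (Ne.symm hij) h01]
        _ ≤ P (Phi R 0 ⁻¹' Q (t, u, v)) * q := le_rfl
    · have hQe : Q (t, u, v) = ∅ := by
        ext l
        simp only [hQ, Set.mem_setOf_eq, Set.mem_empty_iff_false, iff_false]
        rintro ⟨_, _, hA', _⟩
        exact hA hA'
      simp [hQe]
  calc mu R (MeetSet x y)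
      = P (Phi R 0 ⁻¹' MeetSet x y) := (P_Phi_preimage R hd 0 (meas_MeetSet x y)).symm
    _ ≤ P (Phi R 0 ⁻¹' ⋃ tuv : ℕ × (Fin d → ℕ) × (Fin d → ℕ),
          (Q tuv ∩ shl tuv.1 ⁻¹' MeetSet tuv.2.1 tuv.2.2)) :=
        measure_mono (Set.preimage_mono hcover)
    _ = P (⋃ tuv : ℕ × (Fin d → ℕ) × (Fin d → ℕ),
          Phi R 0 ⁻¹' (Q tuv ∩ shl tuv.1 ⁻¹' MeetSet tuv.2.1 tuv.2.2)) := by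
        rw [Set.preimage_iUnion]
    _ ≤ ∑' tuv : ℕ × (Fin d → ℕ) × (Fin d → ℕ),
          P (Phi R 0 ⁻¹' (Q tuv ∩ shl tuv.1 ⁻¹' MeetSet tuv.2.1 tuv.2.2)) :=
        measure_iUnion_le _
    _ ≤ ∑' tuv : ℕ × (Fin d → ℕ) × (Fin d → ℕ), P (Phi R 0 ⁻¹' Q tuv) * q :=
        ENNReal.tsum_le_tsum hPQ
    _ = (∑' tuv : ℕ × (Fin d → ℕ) × (Fin d → ℕ), P (Phi R 0 ⁻¹' Q tuv)) * q :=
        ENNReal.tsum_mul_right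
    _ ≤ 1 * q := by
        refine mul_le_mul_left ?_ q
        rw [← measure_iUnion (fun a b hab => Disjoint.preimage _ (hdisj hab))
          (fun tuv => (meas_Phi R 0) (measQ tuv))]
        exact prob_le_one
    _ = q := one_mul q

/-- **Step A**: first-step decomposition lower bound for the origin meeting probability. -/
lemma orig_ge (hd : 0 < d) {i0 i1 : Fin d} (h01 : i0 ≠ i1) :
    (d : ENNReal) * (d : ENNReal)⁻¹ ^ 2
      + (d : ENNReal) * (((d - 1 : ℕ) : ENNReal)
          * ((d : ENNReal)⁻¹ ^ 2 * mu R (MeetSet (bv i0) (bv i1))))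
      ≤ mu R (OrigSet d) := by
  classical
  haveI := R.hprob
  set q := mu R (MeetSet (bv i0) (bv i1)) with hqdef
  set C : Fin d × Fin d → Set (Lam d) := fun p =>
    {l | l (Sum.inl 0) = p.1 ∧ l (Sum.inr 0) = p.2} with hC
  set piece : Fin d × Fin d → Set (Lam d) := fun p =>
    C p ∩ (if p.1 = p.2 then Set.univ else shl 1 ⁻¹' MeetSet (bv p.1) (bv p.2)) with hpiece
  have measC : ∀ p, MeasurableSet (C p) := by
    rintro ⟨i, j⟩
    have hrw : C (i, j) = (fun l : Lam d => l (Sum.inl 0)) ⁻¹' {i}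
        ∩ (fun l : Lam d => l (Sum.inr 0)) ⁻¹' {j} := by
      ext l
      simp [hC]
    rw [hrw]
    exact ((measurable_pi_apply _) (measurableSet_singleton _)).inter
      ((measurable_pi_apply _) (measurableSet_singleton _))
  have measPiece : ∀ p, MeasurableSet (piece p) := by
    rintro ⟨i, j⟩
    refine (measC _).inter ?_
    show MeasurableSet (if i = j then Set.univ else shl 1 ⁻¹' MeetSet (bv i) (bv j))
    split_ifs with h
    · exact MeasurableSet.univ
    · exact meas_shl 1 (meas_MeetSet _ _)
  have hsub : ∀ p, piece p ⊆ OrigSet d := by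
    rintro ⟨i, j⟩ l hl
    obtain ⟨⟨h1, h2⟩, hm⟩ := hl
    by_cases h : i = j
    · refine ⟨1, le_rfl, funext fun c => ?_⟩
      have e1 : (1:ℕ) = 0 + 1 := rfl
      rw [e1, WW_succ, VV_succ, h1, h2]
      simp [WW, VV, wk, h]
    · rw [show (if i = j then Set.univ else shl 1 ⁻¹' MeetSet (bv i) (bv j))
          = shl 1 ⁻¹' MeetSet (bv i) (bv j) from if_neg h] at hm
      obtain ⟨m, hmm⟩ := hm
      refine ⟨1 + m, by omega, ?_⟩
      have hW1 : WW (fun _ => 0) 1 l = bv i := by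
        funext c
        have e1 : (1:ℕ) = 0 + 1 := rfl
        rw [e1, WW_succ, h1]
        simp [WW, wk, bv]
      have hV1 : VV (fun _ => 0) 1 l = bv j := by
        funext c
        have e1 : (1:ℕ) = 0 + 1 := rfl
        rw [e1, VV_succ, h2]
        simp [VV, wk, bv]
      rw [WW_add _ 1 m l, VV_add _ 1 m l, hW1, hV1]
      exact hmm
  have hdisj : Pairwise (Function.onFun Disjoint (fun p => Phi R 0 ⁻¹' piece p)) := by
    rintro p p' hne
    show Disjoint (Phi R 0 ⁻¹' piece p) (Phi R 0 ⁻¹' piece p')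
    refine Disjoint.preimage _ ?_
    rw [Set.disjoint_left]
    rintro l hl hl'
    exact hne (Prod.ext_iff.mpr ⟨hl.1.1.symm.trans hl'.1.1, hl.1.2.symm.trans hl'.1.2⟩)
  have hCval : ∀ p : Fin d × Fin d, P (Phi R 0 ⁻¹' C p) = (d : ENNReal)⁻¹ ^ 2 := by
    rintro ⟨i, j⟩
    have hset : Phi R 0 ⁻¹' C (i, j)
        = ⋂ j' ∈ ({Sum.inl 0, Sum.inr 0} : Finset (ℕ ⊕ ℕ)),
            inc R j' ⁻¹' {Sum.elim (fun _ => i) (fun _ => j) j'} := by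
      ext ω
      simp only [hC, Set.mem_preimage, Set.mem_setOf_eq, Finset.mem_insert,
        Finset.mem_singleton, Set.mem_iInter]
      constructor
      · rintro ⟨ha, hb⟩ j' hj'
        rcases hj' with rfl | rfl
        · exact ha
        · exact hb
      · intro hall
        exact ⟨hall (Sum.inl 0) (Or.inl rfl), hall (Sum.inr 0) (Or.inr rfl)⟩
    rw [hset, cylP R _ _, Finset.card_insert_of_notMem (by simp), Finset.card_singleton]
  have hval : ∀ p : Fin d × Fin d, P (Phi R 0 ⁻¹' piece p)
      = if p.1 = p.2 then (d : ENNReal)⁻¹ ^ 2 else (d : ENNReal)⁻¹ ^ 2 * q := by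
    rintro ⟨i, j⟩
    by_cases h : i = j
    · rw [if_pos h]
      have hp : piece (i, j) = C (i, j) := by
        rw [hpiece]
        simp [h]
      rw [hp, hCval]
    · rw [if_neg h]
      set A1 : Set (Fin 1 → Fin d × Fin d) := {p | p 0 = (i, j)} with hA1
      have hCA : Phi R 0 ⁻¹' C (i, j) = rho R 1 ⁻¹' A1 := by
        ext ω
        simp only [hC, hA1, Set.mem_preimage, Set.mem_setOf_eq, rho, Prod.ext_iff]
        exact Iff.rfl
      have hp : piece (i, j) = C (i, j) ∩ shl 1 ⁻¹' MeetSet (bv i) (bv j) := by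
        rw [hpiece]
        simp [h]
      have hpre : Phi R 0 ⁻¹' piece (i, j)
          = (rho R 1 ⁻¹' A1) ∩ Phi R 1 ⁻¹' MeetSet (bv i) (bv j) := by
        have hsh : Phi R 0 ⁻¹' (shl 1 ⁻¹' MeetSet (bv i) (bv j))
            = Phi R 1 ⁻¹' MeetSet (bv i) (bv j) := by
          ext ω
          simp only [Set.mem_preimage]
          rw [shl_Phi]
        rw [hp, Set.preimage_inter, hCA, hsh]
      rw [hpre, indep_main R 1 A1 (meas_MeetSet _ _), ← hCA, hCval,
        P_Phi_preimage R hd 1 (meas_MeetSet _ _), meet_bv_eq R hd i j i0 i1 h h01]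
  have hsum : ∑' p : Fin d × Fin d, P (Phi R 0 ⁻¹' piece p) ≤ mu R (OrigSet d) := by
    rw [← measure_iUnion hdisj (fun p => (meas_Phi R 0) (measPiece p)),
      ← P_Phi_preimage R hd 0 meas_OrigSet, ← Set.preimage_iUnion]
    exact measure_mono (Set.preimage_mono (Set.iUnion_subset hsub))
  rw [tsum_fintype] at hsum
  have htot : ∑ p : Fin d × Fin d, P (Phi R 0 ⁻¹' piece p)
      = (d : ENNReal) * (d : ENNReal)⁻¹ ^ 2
        + (d : ENNReal) * (((d - 1 : ℕ) : ENNReal) * ((d : ENNReal)⁻¹ ^ 2 * q)) := by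
    rw [Finset.sum_congr rfl (fun p _ => hval p), Fintype.sum_prod_type]
    have hinner : ∀ i : Fin d,
        (∑ j : Fin d, if i = j then (d : ENNReal)⁻¹ ^ 2 else (d : ENNReal)⁻¹ ^ 2 * q)
          = (d : ENNReal)⁻¹ ^ 2 + ((d - 1 : ℕ) : ENNReal) * ((d : ENNReal)⁻¹ ^ 2 * q) := by
      intro i
      rw [Finset.sum_ite, Finset.sum_const, Finset.sum_const]
      have h1 : (Finset.univ.filter (fun j => i = j)).card = 1 := by
        rw [Finset.filter_eq]
        simp
      have h2 : (Finset.univ.filter (fun j => ¬ i = j)).card = d - 1 := by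
        have h3 := Finset.card_filter_add_card_filter_not
          (s := (Finset.univ : Finset (Fin d))) (p := fun j => i = j)
        rw [h1] at h3
        simp only [Finset.card_univ, Fintype.card_fin] at h3
        omega
      rw [h1, h2, one_nsmul, nsmul_eq_mul]
    rw [Finset.sum_congr rfl (fun i _ => hinner i), Finset.sum_const, Finset.card_univ,
      Fintype.card_fin, nsmul_eq_mul, mul_add]
  rw [← htot]
  exact hsum

end Model

end M15


/-- Assume there is a constant `c₃ > 0` such that
`ℙ_d(τ_{O,O} < ∞) ≤ 1/d + c₃/d²` for every `d ≥ 4`.  Then for every `d ≥ 4` and all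
`x, y ∈ ℤ₊^d` with `x ≠ y` and `‖x‖ = ‖y‖`, `ℙ_d(τ_{x,y} < ∞) ≤ c₃/(d(d − 1))`. -/
theorem meet_prob_same_level (Ω : ℕ → Type) (mΩ : ∀ d, MeasurableSpace (Ω d))
    (P : ∀ d, @Measure (Ω d) (mΩ d))
    (RW : ∀ d, RWModel (P d) d)
    (c₃ : ℝ) (hc₃ : 0 < c₃)
    (hyp : ∀ d : ℕ, 4 ≤ d →
      ((P d) (meetOrigin (RW d).inc1 (RW d).inc2)).toReal ≤ 1 / d + c₃ / (d : ℝ) ^ 2) :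
    ∀ d : ℕ, 4 ≤ d → ∀ x y : Fin d → ℕ, x ≠ y → nrm x = nrm y →
      ((P d) (meetEvent (RW d).inc1 (RW d).inc2 x y)).toReal ≤
        c₃ / ((d : ℝ) * ((d : ℝ) - 1)) := by
  intro d hd4 x y hxy hnrm
  classical
  set R := RW d with hR
  haveI hPP := R.hprob
  have hd : 0 < d := by omega
  set i0 : Fin d := ⟨0, by omega⟩ with hi0
  set i1 : Fin d := ⟨1, by omega⟩ with hi1
  have h01 : i0 ≠ i1 := Fin.ne_of_val_ne (by norm_num)
  set q : ENNReal := M15.mu R (M15.MeetSet (M15.bv i0) (M15.bv i1)) with hq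
  haveI : IsProbabilityMeasure (M15.mu R) := M15.mu_prob R
  have hO : meetOrigin R.inc1 R.inc2 = M15.Phi R 0 ⁻¹' M15.OrigSet d := rfl
  have hE : meetEvent R.inc1 R.inc2 x y = M15.Phi R 0 ⁻¹' M15.MeetSet x y := by
    have h0 : nrm y - nrm x = 0 := by omega
    ext ω
    simp only [meetEvent, h0, Set.mem_setOf_eq, Set.mem_preimage, Nat.sub_zero, Nat.zero_le,
      true_and]
    exact Iff.rfl
  have hPO : (P d) (meetOrigin R.inc1 R.inc2) = M15.mu R (M15.OrigSet d) := by
    rw [hO, M15.P_Phi_preimage R hd 0 M15.meas_OrigSet]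
  have hPE : (P d) (meetEvent R.inc1 R.inc2 x y) = M15.mu R (M15.MeetSet x y) := by
    rw [hE, M15.P_Phi_preimage R hd 0 (M15.meas_MeetSet x y)]
  have hB : M15.mu R (M15.MeetSet x y) ≤ q := M15.meet_le R hd x y hxy h01
  have hA := M15.orig_ge R hd h01
  have hhyp := hyp d hd4
  rw [hPO] at hhyp
  have hdE0 : (d : ENNReal) ≠ 0 := by
    simp only [ne_eq, Nat.cast_eq_zero]
    omega
  have hInv : (d : ENNReal)⁻¹ ≠ ⊤ := ENNReal.inv_ne_top.mpr hdE0
  have hInv2 : (d : ENNReal)⁻¹ ^ 2 ≠ ⊤ := ENNReal.pow_ne_top hInv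
  have hqT : q ≠ ⊤ := measure_ne_top _ _
  have hA' := ENNReal.toReal_mono (measure_ne_top _ _) hA
  rw [ENNReal.toReal_add (ENNReal.mul_ne_top (ENNReal.natCast_ne_top d) hInv2)
      (ENNReal.mul_ne_top (ENNReal.natCast_ne_top d)
        (ENNReal.mul_ne_top (ENNReal.natCast_ne_top _) (ENNReal.mul_ne_top hInv2 hqT))),
    ENNReal.toReal_mul, ENNReal.toReal_mul, ENNReal.toReal_mul, ENNReal.toReal_mul,
    ENNReal.toReal_pow, ENNReal.toReal_inv, ENNReal.toReal_natCast,
    ENNReal.toReal_natCast] at hA'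
  set qr := q.toReal with hqr
  have hq0 : 0 ≤ qr := ENNReal.toReal_nonneg
  have hcast : ((d - 1 : ℕ) : ℝ) = (d : ℝ) - 1 := by
    have h1 : (1:ℕ) ≤ d := by omega
    rw [Nat.cast_sub h1, Nat.cast_one]
  have hdR : (4:ℝ) ≤ (d:ℝ) := by exact_mod_cast hd4
  have hdR0 : (0:ℝ) < (d:ℝ) := by linarith
  have hkey : (d:ℝ) * (((d:ℝ) - 1) * (((d:ℝ)⁻¹)^2 * qr)) ≤ c₃ / (d:ℝ)^2 := by
    have h1 : (d:ℝ) * ((d:ℝ)⁻¹)^2 = 1 / (d:ℝ) := by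
      field_simp
    rw [hcast, h1] at hA'
    have := hA'.trans hhyp
    linarith
  have hqrb : qr ≤ c₃ / ((d:ℝ) * ((d:ℝ) - 1)) := by
    have hpos : (0:ℝ) < (d:ℝ) * ((d:ℝ) - 1) := by nlinarith
    rw [le_div_iff₀ hpos]
    have h3 := mul_le_mul_of_nonneg_right hkey
      (le_of_lt (by positivity : (0:ℝ) < (d:ℝ)^2))
    have e1 : ((d:ℝ) * (((d:ℝ) - 1) * (((d:ℝ)⁻¹)^2 * qr))) * (d:ℝ)^2
        = qr * ((d:ℝ) * ((d:ℝ) - 1)) := by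
      field_simp
    have e2 : (c₃ / (d:ℝ)^2) * (d:ℝ)^2 = c₃ := by
      field_simp
    rw [e1, e2] at h3
    exact h3
  calc ((P d) (meetEvent R.inc1 R.inc2 x y)).toReal
      = (M15.mu R (M15.MeetSet x y)).toReal := by rw [hPE]
    _ ≤ qr := ENNReal.toReal_mono hqT hB
    _ ≤ c₃ / ((d:ℝ) * ((d:ℝ) - 1)) := hqrb
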